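/- For every r ≥ 1, the odd wheel W_{2r+3} (an odd cycle on 2r+3 vertices plus a dominating vertex) is a minimal forbidden induced subgraph for Ω_{2r} but not for Υ_{2r}; in particular Δ(W_{2r+3}) = 2r+3 = ω(W_{2r+3}) + 2r while χ(W_{2r+3}) = 4. -/

import Mathlib

open SimpleGraph

attribute [local instance] Classical.propDecidable

set_option linter.unnecessarySeqFocus false

/-- `G ∈ Υ_k`: every nonempty induced subgraph `H` satisfies `Δ(H) + 1 ≤ χ(H) + k`,
i.e. `Δ(H) ≤ χ(H) + k - 1`. -/
def UpsilonMem (k : ℕ) {V : Type*} [Fintype V] (G : SimpleGraph V) : Prop :=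
  ∀ s : Finset V, s.Nonempty →
    ((G.induce (s : Set V)).maxDegree + 1 : ℕ∞) ≤
      (G.induce (s : Set V)).chromaticNumber + (k : ℕ∞)

/-- `G ∈ Ω_k`: every nonempty induced subgraph `H` satisfies `Δ(H) + 1 ≤ ω(H) + k`. -/
def OmegaMem (k : ℕ) {V : Type*} [Fintype V] (G : SimpleGraph V) : Prop :=
  ∀ s : Finset V, s.Nonempty →
    (G.induce (s : Set V)).maxDegree + 1 ≤ (G.induce (s : Set V)).cliqueNum + k

/-- `G` is a minimal forbidden induced subgraph for `Υ_k`. -/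
def MinForbUpsilon (k : ℕ) {V : Type*} [Fintype V] (G : SimpleGraph V) : Prop :=
  ¬ UpsilonMem k G ∧
    ∀ s : Finset V, s ≠ Finset.univ → UpsilonMem k (G.induce (s : Set V))

/-- `G` is a minimal forbidden induced subgraph for `Ω_k`. -/
def MinForbOmega (k : ℕ) {V : Type*} [Fintype V] (G : SimpleGraph V) : Prop :=
  ¬ OmegaMem k G ∧
    ∀ s : Finset V, s ≠ Finset.univ → OmegaMem k (G.induce (s : Set V))

/-- `v` is a dominating vertex of `G`. -/
def IsDominatingVertex {V : Type*} (G : SimpleGraph V) (v : V) : Prop :=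
  ∀ w, w ≠ v → G.Adj v w

/-- In every optimal proper coloring of `G`, every used color class has at least 2 vertices. -/
def AllColorClassesBig {V : Type*} [Fintype V] (G : SimpleGraph V) : Prop :=
  ∀ (n : ℕ) (C : G.Coloring (Fin n)), (n : ℕ∞) = G.chromaticNumber →
    ∀ c : Fin n, (∃ u, C u = c) → 2 ≤ Fintype.card {u // C u = c}

/-- `G` is a perfect graph: clique number equals chromatic number for every induced subgraph. -/
def IsPerfect {V : Type*} [Fintype V] (G : SimpleGraph V) : Prop :=
  ∀ s : Finset V,
    (((G.induce (s : Set V)).cliqueNum : ℕ∞)) = (G.induce (s : Set V)).chromaticNumber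

/-- Add a dominating vertex to `G`. -/
def cone {V : Type*} (G : SimpleGraph V) : SimpleGraph (Option V) where
  Adj a b := match a, b with
    | some a, some b => G.Adj a b
    | some _, none => True
    | none, some _ => True
    | none, none => False
  symm := ⟨by rintro (_|a) (_|b) h <;> simp_all <;> exact h.symm⟩
  loopless := ⟨by rintro (_|a) h <;> simp_all⟩

/-- The claw `K_{1,3}`. -/
def claw : SimpleGraph (Fin 1 ⊕ Fin 3) := completeBipartiteGraph (Fin 1) (Fin 3)

/-- The gem: `P₄` plus a dominating vertex. -/
def gem : SimpleGraph (Option (Fin 4)) := cone (pathGraph 4)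

/-- The wheel `W₄`: `C₄` plus a dominating vertex. -/
def wheel4 : SimpleGraph (Option (Fin 4)) := cone (cycleGraph 4)

/-- The butterfly: two triangles sharing exactly one vertex. -/
def butterfly : SimpleGraph (Fin 5) :=
  SimpleGraph.fromRel (fun a b =>
    (a, b) ∈ [((0:Fin 5), (1:Fin 5)), (0,2), (1,2), (0,3), (0,4), (3,4)])

/-- `G` is a disjoint union of complete graphs. -/
def IsUnionOfCliques {V : Type*} (G : SimpleGraph V) : Prop :=
  ∀ a b c, G.Adj a b → G.Adj b c → a ≠ c → G.Adj a c

/-- `G` is neighborhood perfect: the neighborhood of every vertex induces a perfect graph. -/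
def NbhdPerfect {V : Type*} [Fintype V] (G : SimpleGraph V) : Prop :=
  ∀ v : V, IsPerfect (G.induce (G.neighborSet v))


set_option maxHeartbeats 1000000

lemma maxDegree_inst_irrel {V : Type*} (G : SimpleGraph V) (F1 F2 : Fintype V)
    (D1 D2 : DecidableRel G.Adj) :
    @SimpleGraph.maxDegree V G F1 D1 = @SimpleGraph.maxDegree V G F2 D2 := by
  obtain rfl : F1 = F2 := Subsingleton.elim _ _
  obtain rfl : D1 = D2 := Subsingleton.elim _ _
  rfl
attribute [local instance] Classical.propDecidable
set_option linter.unnecessarySeqFocus false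
set_option maxHeartbeats 1600000
open Fin.NatCast Fin.CommRing


lemma fin_cast_val (r a : ℕ) (h : a < 2*r+3) : ((a : Fin (2*r+3))).val = a := by
  rw [Fin.val_natCast, Nat.mod_eq_of_lt h]

lemma fin_ofNat_ne_zero (r a : ℕ) (h1 : 0 < a) (h2 : a < 2*r+3) : (a : Fin (2*r+3)) ≠ 0 := by
  intro h
  rw [Fin.ext_iff, fin_cast_val r a h2] at h
  simp at h; omega

lemma fin_one_ne (r : ℕ) : (1 : Fin (2*r+3)) ≠ 0 := by
  have := fin_ofNat_ne_zero r 1 (by omega) (by omega); simpa using this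

lemma fin_two_ne (r : ℕ) : (1+1 : Fin (2*r+3)) ≠ 0 := by
  have := fin_ofNat_ne_zero r 2 (by omega) (by omega)
  have e : ((2:ℕ) : Fin (2*r+3)) = 1 + 1 := by push_cast; ring
  rwa [e] at this

lemma fin_three_ne (r : ℕ) (hr : 1 ≤ r) : (1+1+1 : Fin (2*r+3)) ≠ 0 := by
  have := fin_ofNat_ne_zero r 3 (by omega) (by omega)
  have e : ((3:ℕ) : Fin (2*r+3)) = 1 + 1 + 1 := by push_cast; ring
  rwa [e] at this

lemma cyc_adj (r : ℕ) {u v : Fin (2*r+3)} :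
    (cycleGraph (2*r+3)).Adj u v ↔ u = v + 1 ∨ v = u + 1 := by
  rw [cycleGraph_adj]
  constructor
  · rintro (h|h)
    · exact Or.inl ((sub_eq_iff_eq_add.mp h).trans (add_comm 1 v))
    · exact Or.inr ((sub_eq_iff_eq_add.mp h).trans (add_comm 1 u))
  · rintro (h|h)
    · left; rw [h]; ring
    · right; rw [h]; ring

lemma cyc_no_triangle (r : ℕ) (a b c : Fin (2*r+3)) (hab : (cycleGraph (2*r+3)).Adj a b)
    (hbc : (cycleGraph (2*r+3)).Adj b c) (hac : (cycleGraph (2*r+3)).Adj a c) (hr : 1 ≤ r) : False := by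
  have hne_ac := hac.ne
  rw [cyc_adj] at hab hbc hac
  rcases hab with h|h <;> rcases hbc with h'|h'
  · -- a = b+1, b = c+1
    subst h; subst h'
    rcases hac with h''|h''
    · -- c+1+1 = c+1
      rw [add_assoc] at h''
      exact fin_one_ne r (add_eq_right.mp (add_left_cancel h''))
    · -- c = c+1+1+1
      rw [add_assoc, add_assoc, ← add_assoc (1:Fin (2*r+3))] at h''
      exact fin_three_ne r hr (left_eq_add.mp h'')
  · -- a = b+1, c = b+1
    exact hne_ac (h.trans h'.symm)
  · -- b = a+1, b = c+1
    exact hne_ac (add_right_cancel (h.symm.trans h'))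
  · -- b = a+1, c = b+1
    subst h; subst h'
    rcases hac with h''|h''
    · -- a = a+1+1+1
      rw [add_assoc, add_assoc, ← add_assoc (1:Fin (2*r+3))] at h''
      exact fin_three_ne r hr (left_eq_add.mp h'')
    · -- a+1+1 = a+1
      rw [add_assoc] at h''
      exact fin_one_ne r (add_eq_right.mp (add_left_cancel h''))

section Gen
variable {V : Type*} {W : Type*} [Fintype V] [Fintype W]

lemma cliqueNum_le_of_cliqueFree {G : SimpleGraph V} {k : ℕ} (h : G.CliqueFree (k+1)) :
    G.cliqueNum ≤ k := by
  by_contra hlt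
  push_neg at hlt
  obtain ⟨s, hs⟩ := G.exists_isNClique_cliqueNum
  obtain ⟨u, hu, hcard⟩ := Finset.exists_subset_card_eq (show k + 1 ≤ s.card by rw [hs.2]; omega)
  exact h u ⟨hs.1.subset hu, hcard⟩

lemma cliqueNum_le_of_embedding {G : SimpleGraph V} {H : SimpleGraph W} (f : G ↪g H) :
    G.cliqueNum ≤ H.cliqueNum := by
  obtain ⟨s, hs⟩ := G.exists_isNClique_cliqueNum
  have hc : H.IsClique (s.map f.toEmbedding) := by
    intro a ha b hb hab
    simp only [Finset.coe_map, Set.mem_image, Finset.mem_coe] at ha hb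
    obtain ⟨a, ha, rfl⟩ := ha; obtain ⟨b, hb, rfl⟩ := hb
    exact f.map_adj_iff.2 (hs.1 ha hb (fun h => hab (by rw [h])))
  have h2 := hc.card_le_cliqueNum
  rwa [Finset.card_map, hs.2] at h2

lemma degree_eq_of_iso {G : SimpleGraph V} {H : SimpleGraph W} (e : G ≃g H) (v : V) :
    H.degree (e v) = G.degree v := by
  rw [← card_neighborSet_eq_degree, ← card_neighborSet_eq_degree]
  exact Fintype.card_congr (e.mapNeighborSet v).symm

lemma maxDegree_eq_of_iso {G : SimpleGraph V} {H : SimpleGraph W} (e : G ≃g H) :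
    G.maxDegree = H.maxDegree := by
  apply le_antisymm
  · apply maxDegree_le_of_forall_degree_le
    intro v
    rw [← degree_eq_of_iso e v]
    exact degree_le_maxDegree _ _
  · apply maxDegree_le_of_forall_degree_le
    intro w
    have : w = e (e.symm w) := (e.apply_symm_apply w).symm
    rw [this, degree_eq_of_iso e]
    exact degree_le_maxDegree _ _

lemma chromaticNumber_eq_of_iso {V W : Type*} {G : SimpleGraph V} {H : SimpleGraph W} (e : G ≃g H) :
    G.chromaticNumber = H.chromaticNumber :=
  le_antisymm (chromaticNumber_mono_of_hom e.toEmbedding.toHom)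
    (chromaticNumber_mono_of_hom e.symm.toEmbedding.toHom)

noncomputable def induceInduceIso {V : Type*} (G : SimpleGraph V) (A : Set V) (B : Set A) :
    (G.induce A).induce B ≃g G.induce (Subtype.val '' B) where
  toEquiv := Equiv.Set.image Subtype.val B Subtype.val_injective
  map_rel_iff' := by
    intro a b
    simp [Equiv.Set.image, Equiv.Set.imageOfInjOn]

lemma card_le_cliqueNum_induce {G : SimpleGraph V} {A : Set V} (p : Finset V)
    (hp : ↑p ⊆ A) (hc : G.IsClique ↑p) : p.card ≤ (G.induce A).cliqueNum := by
  classical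
  let q : Finset A := p.attach.map ⟨fun x => (⟨x.1, hp x.2⟩ : A), by
    intro x y h; exact Subtype.ext (congrArg Subtype.val h : _)⟩
  have hq : (G.induce A).IsClique ↑q := by
    intro a ha b hb hab
    simp only [q, Finset.coe_map, Set.mem_image, Finset.mem_coe, Finset.mem_attach] at ha hb
    obtain ⟨⟨a, ha'⟩, -, rfl⟩ := ha
    obtain ⟨⟨b, hb'⟩, -, rfl⟩ := hb
    exact hc ha' hb' (fun h => hab (Subtype.ext h))
  have h2 := hq.card_le_cliqueNum
  rwa [Finset.card_map, Finset.card_attach] at h2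

lemma card_le_chromaticNumber_induce {G : SimpleGraph V} {A : Set V} (p : Finset V)
    (hp : ↑p ⊆ A) (hc : G.IsClique ↑p) :
    (p.card : ℕ∞) ≤ (G.induce A).chromaticNumber := by
  classical
  let q : Finset A := p.attach.map ⟨fun x => (⟨x.1, hp x.2⟩ : A), by
    intro x y h; exact Subtype.ext (congrArg Subtype.val h : _)⟩
  have hq : (G.induce A).IsClique ↑q := by
    intro a ha b hb hab
    simp only [q, Finset.coe_map, Set.mem_image, Finset.mem_coe, Finset.mem_attach] at ha hb
    obtain ⟨⟨a, ha'⟩, -, rfl⟩ := ha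
    obtain ⟨⟨b, hb'⟩, -, rfl⟩ := hb
    exact hc ha' hb' (fun h => hab (Subtype.ext h))
  have h2 := hq.card_le_chromaticNumber
  rwa [Finset.card_map, Finset.card_attach] at h2

end Gen

section Deg
variable (r : ℕ) (A : Set (Option (Fin (2*r+3))))

/-- The rim part of `A` as a finset. -/
noncomputable def Sf : Finset (Fin (2*r+3)) := Finset.univ.filter (fun i => some i ∈ A)

lemma mem_Sf {i : Fin (2*r+3)} : i ∈ Sf r A ↔ some i ∈ A := by
  simp [Sf]

lemma hub_degree (h : none ∈ A) :
    ((cone (cycleGraph (2*r+3))).induce A).degree ⟨none, h⟩ = (Sf r A).card := by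
  rw [SimpleGraph.degree, neighborFinset_eq_filter]
  refine (Finset.card_bij (fun (a : Fin (2*r+3)) (ha : a ∈ Sf r A) =>
      (⟨some a, (mem_Sf r A).1 ha⟩ : ↥A)) ?_ ?_ ?_).symm
  · intro a ha
    simp only [Finset.mem_filter, Finset.mem_univ, true_and]
    exact trivial
  · intro a ha b hb hab
    have := congrArg Subtype.val hab
    simpa using this
  · rintro ⟨(_|i), hb⟩ hmem
    · simp only [Finset.mem_filter, Finset.mem_univ, true_and] at hmem
      exact (hmem.ne (Subtype.ext rfl)).elim
    · exact ⟨i, (mem_Sf r A).2 hb, rfl⟩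

lemma rim_degree_le {i : Fin (2*r+3)} (h : some i ∈ A) :
    ((cone (cycleGraph (2*r+3))).induce A).degree ⟨some i, h⟩ ≤ 3 := by
  rw [SimpleGraph.degree, neighborFinset_eq_filter]
  have hsub : ∀ w ∈ Finset.univ.filter
      (((cone (cycleGraph (2*r+3))).induce A).Adj ⟨some i, h⟩ ·),
      (w : Option (Fin (2*r+3))) ∈
        ({none, some (i-1), some (i+1)} : Finset (Option (Fin (2*r+3)))) := by
    rintro ⟨(_|j), hw⟩ hmem
    · simp
    · simp only [Finset.mem_filter, Finset.mem_univ, true_and] at hmem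
      have hadj : (cycleGraph (2*r+3)).Adj i j := hmem
      rw [cyc_adj] at hadj
      simp only [Finset.mem_insert, Finset.mem_singleton]
      rcases hadj with h'|h'
      · right; left
        have : i - 1 = j := by rw [sub_eq_iff_eq_add]; exact h'
        rw [this]
      · right; right; rw [h']
  calc (Finset.univ.filter
      (((cone (cycleGraph (2*r+3))).induce A).Adj ⟨some i, h⟩ ·)).card
      ≤ ({none, some (i-1), some (i+1)} : Finset (Option (Fin (2*r+3)))).card :=
        Finset.card_le_card_of_injOn Subtype.val hsub Subtype.val_injective.injOn
    _ ≤ 3 := by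
        refine (Finset.card_insert_le _ _).trans ?_
        have := Finset.card_insert_le (some (i-1)) ({some (i+1)} : Finset (Option (Fin (2*r+3))))
        simp only [Finset.card_singleton] at this
        omega

lemma sf_card_lt (hA : A ≠ Set.univ) (hhub : none ∈ A) : (Sf r A).card ≤ 2*r+2 := by
  obtain ⟨x, hx⟩ : ∃ x, x ∉ A := by
    by_contra hc
    push_neg at hc
    exact hA (Set.eq_univ_iff_forall.2 hc)
  obtain (_|i) := x
  · exact absurd hhub hx
  · have hsub : Sf r A ⊆ Finset.univ.erase i := by
      intro j hj
      refine Finset.mem_erase.2 ⟨?_, Finset.mem_univ j⟩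
      rintro rfl
      exact hx ((mem_Sf r A).1 hj)
    have := Finset.card_le_card hsub
    rwa [Finset.card_erase_of_mem (Finset.mem_univ i), Finset.card_univ,
      Fintype.card_fin] at this

lemma indep_bound (S : Finset (Fin (2*r+3)))
    (h : ∀ i ∈ S, ∀ j ∈ S, ¬ (cycleGraph (2*r+3)).Adj i j) : S.card ≤ 2*r+1 := by
  by_contra hc
  push_neg at hc
  have hcompl : Sᶜ.card ≤ 1 := by
    have := Finset.card_compl S
    rw [Fintype.card_fin] at this
    omega
  have key : ∃ j : Fin (2*r+3), j ∈ S ∧ j + 1 ∈ S := by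
    rcases Finset.eq_empty_or_nonempty Sᶜ with he|⟨j, hj⟩
    · have hS : ∀ x, x ∈ S := by
        intro x
        by_contra hx
        exact Finset.notMem_empty x (he ▸ Finset.mem_compl.2 hx)
      exact ⟨0, hS 0, hS 1⟩
    · have honly : ∀ x, x ∉ S → x = j := by
        intro x hx
        exact Finset.card_le_one.1 hcompl x (Finset.mem_compl.2 hx) j hj
      refine ⟨j + 1, ?_, ?_⟩
      · by_contra hx
        have := honly _ hx
        exact fin_one_ne r (add_eq_left.mp this)
      · by_contra hx
        have h2 := honly _ hx
        rw [add_assoc] at h2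
        exact fin_two_ne r (add_eq_left.mp h2)
  obtain ⟨j, hj1, hj2⟩ := key
  exact h j hj1 (j+1) hj2 ((cyc_adj r).2 (Or.inr rfl))

end Deg

/-- the 4-coloring -/
noncomputable def colf (r : ℕ) : Option (Fin (2*r+3)) → Fin 4 := fun v =>
  match v with
  | none => 3
  | some i => if i.val = 2*r+2 then 2 else ⟨i.val % 2, by omega⟩

lemma colf_ne (r : ℕ) (i j : Fin (2*r+3)) (h : j = i + 1) :
    colf r (some i) ≠ colf r (some j) := by
  have hj : j.val = (i.val + 1) % (2*r+3) := by rw [h, Fin.add_def]; rfl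
  have hj' : (i.val = 2*r+2 ∧ j.val = 0) ∨ (i.val < 2*r+2 ∧ j.val = i.val+1) := by
    rcases Nat.lt_or_ge (i.val+1) (2*r+3) with hlt|hge
    · exact Or.inr ⟨by omega, by rw [hj, Nat.mod_eq_of_lt hlt]⟩
    · have h1 : i.val = 2*r+2 := by have := i.isLt; omega
      refine Or.inl ⟨h1, ?_⟩
      rw [hj, h1]
      simp
  intro heq
  have hv := congrArg Fin.val heq
  simp only [colf, apply_ite Fin.val] at hv
  have e2 : (2 : Fin 4).val = 2 := rfl
  rw [e2] at hv
  split_ifs at hv <;> omega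

lemma colf_valid (r : ℕ) : ∀ {a b : Option (Fin (2*r+3))},
    (cone (cycleGraph (2*r+3))).Adj a b → colf r a ≠ colf r b := by
  rintro (_|i) (_|j) hadj
  · exact absurd hadj id
  · intro heq
    have hv := congrArg Fin.val heq
    simp only [colf, apply_ite Fin.val] at hv
    have e2 : (2 : Fin 4).val = 2 := rfl
    have e3 : (3 : Fin 4).val = 3 := rfl
    rw [e2, e3] at hv
    split_ifs at hv <;> omega
  · intro heq
    have hv := congrArg Fin.val heq
    simp only [colf, apply_ite Fin.val] at hv
    have e2 : (2 : Fin 4).val = 2 := rfl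
    have e3 : (3 : Fin 4).val = 3 := rfl
    rw [e2, e3] at hv
    split_ifs at hv <;> omega
  · have hadj' : (cycleGraph (2*r+3)).Adj i j := hadj
    rw [cyc_adj] at hadj'
    rcases hadj' with h|h
    · exact (colf_ne r j i h).symm
    · exact colf_ne r i j h

noncomputable def col4 (r : ℕ) : (cone (cycleGraph (2*r+3))).Coloring (Fin 4) :=
  Coloring.mk (colf r) (colf_valid r)

lemma no_bool_coloring (r : ℕ) (f : Fin (2*r+3) → Bool)
    (hf : ∀ i j, (cycleGraph (2*r+3)).Adj i j → f i ≠ f j) : False := by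
  have key : ∀ k, ∀ (hk : k < 2*r+3),
      f ⟨k, hk⟩ = if k % 2 = 0 then f ⟨0, by omega⟩ else !f ⟨0, by omega⟩ := by
    intro k
    induction k with
    | zero => intro hk; simp
    | succ m ih =>
      intro hk
      have hm : m < 2*r+3 := by omega
      have hadj : (cycleGraph (2*r+3)).Adj ⟨m, hm⟩ ⟨m+1, hk⟩ := by
        refine (cyc_adj r).2 (Or.inr ?_)
        rw [Fin.add_def]
        exact Fin.ext (by simp [Nat.mod_eq_of_lt hk])
      have hne := hf _ _ hadj
      have hflip : f ⟨m+1, hk⟩ = !f ⟨m, hm⟩ := by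
        cases hm1 : f ⟨m+1, hk⟩ <;> cases hm2 : f ⟨m, hm⟩ <;> simp_all
      rw [hflip, ih hm]
      rcases Nat.even_or_odd m with he|ho
      · have h1 : m % 2 = 0 := Nat.even_iff.1 he
        have h2 : (m+1) % 2 = 1 := by omega
        simp [h1, h2]
      · have h1 : m % 2 = 1 := Nat.odd_iff.1 ho
        have h2 : (m+1) % 2 = 0 := by omega
        simp [h1, h2]
  have hlast := key (2*r+2) (by omega)
  rw [if_pos (by omega : (2*r+2) % 2 = 0)] at hlast
  have hadj : (cycleGraph (2*r+3)).Adj ⟨2*r+2, by omega⟩ ⟨0, by omega⟩ := by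
    refine (cyc_adj r).2 (Or.inr ?_)
    apply Fin.ext
    rw [Fin.add_def]
    show (0:ℕ) = ((2*r+2) + (1: Fin (2*r+3)).val) % (2*r+3)
    have h1 : ((1: Fin (2*r+3))).val = 1 := rfl
    rw [h1]
    simp
  exact hf _ _ hadj hlast

lemma not_colorable_three (r : ℕ) : ¬ (cone (cycleGraph (2*r+3))).Colorable 3 := by
  rintro ⟨C⟩
  set c := C none with hc
  set d : Fin 3 := if c = 0 then 1 else 0 with hd
  have hdc : d ≠ c := by
    rw [hd]
    split_ifs with h
    · rw [h]; decide
    · exact fun e => h e.symm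
  have trich : ∀ (c d x y : Fin 3), d ≠ c → x ≠ c → y ≠ c → x ≠ y → ((x = d) ↔ ¬(y = d)) := by
    decide
  have hCi : ∀ i : Fin (2*r+3), C (some i) ≠ c := by
    intro i e
    exact C.valid (show (cone (cycleGraph (2*r+3))).Adj (some i) none from trivial) (e.trans hc)
  refine no_bool_coloring r (fun i => decide (C (some i) = d)) ?_
  intro i j hadj hfe
  rw [decide_eq_decide] at hfe
  have hij : C (some i) ≠ C (some j) :=
    C.valid (show (cone (cycleGraph (2*r+3))).Adj (some i) (some j) from hadj)
  have := trich c d (C (some i)) (C (some j)) hdc (hCi i) (hCi j) hij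
  tauto

lemma cone_chromaticNumber (r : ℕ) : (cone (cycleGraph (2*r+3))).chromaticNumber = 4 := by
  apply le_antisymm
  · have := (col4 r).colorable.chromaticNumber_le
    simpa using this
  · by_contra h
    push_neg at h
    have h3 : (cone (cycleGraph (2*r+3))).chromaticNumber ≤ 3 := by
      have : (4 : ℕ∞) = 3 + 1 := by norm_num
      rw [this] at h
      exact Order.le_of_lt_add_one h
    exact not_colorable_three r (chromaticNumber_le_iff_colorable.mp (by exact_mod_cast h3))

lemma cone_maxDegree (r : ℕ) : (cone (cycleGraph (2*r+3))).maxDegree = 2*r+3 := by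
  apply le_antisymm
  · have := maxDegree_lt_card_verts (G := cone (cycleGraph (2*r+3)))
    rw [Fintype.card_option, Fintype.card_fin] at this
    omega
  · have hdeg : (cone (cycleGraph (2*r+3))).degree none = 2*r+3 := by
      rw [SimpleGraph.degree, neighborFinset_eq_filter]
      have he : Finset.univ.filter ((cone (cycleGraph (2*r+3))).Adj none)
          = Finset.univ.erase none := by
        ext w
        rcases w with _|i
        · simp only [Finset.mem_filter, Finset.mem_univ, true_and, Finset.mem_erase]
          constructor
          · exact fun h => absurd h id
          · rintro ⟨h, -⟩; exact absurd rfl h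
        · simp only [Finset.mem_filter, Finset.mem_univ, true_and, Finset.mem_erase]
          exact ⟨fun _ => ⟨Option.some_ne_none i, trivial⟩, fun _ => trivial⟩
      rw [he, Finset.card_erase_of_mem (Finset.mem_univ none), Finset.card_univ,
        Fintype.card_option, Fintype.card_fin]
      omega
    have hle := degree_le_maxDegree (cone (cycleGraph (2*r+3))) none
    rw [hdeg] at hle
    exact hle

lemma cone_cliqueFree (r : ℕ) (hr : 1 ≤ r) : (cone (cycleGraph (2*r+3))).CliqueFree 4 := by
  intro s hs
  have htcard : 3 ≤ (s.erase none).card := by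
    by_cases hn : none ∈ s
    · rw [Finset.card_erase_of_mem hn, hs.2]
    · rw [Finset.erase_eq_of_notMem hn, hs.2]; omega
  obtain ⟨u, hu, hucard⟩ := Finset.exists_subset_card_eq htcard
  obtain ⟨a, b, c, hab, hac, hbc, rfl⟩ := Finset.card_eq_three.1 hucard
  have hmem : ∀ x ∈ ({a,b,c} : Finset (Option (Fin (2*r+3)))), x ≠ none ∧ x ∈ s := by
    intro x hx
    have := hu hx
    exact ⟨(Finset.mem_erase.1 this).1, Finset.mem_of_mem_erase this⟩
  obtain ⟨ha, has⟩ := hmem a (by simp)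
  obtain ⟨hb, hbs⟩ := hmem b (by simp)
  obtain ⟨hc, hcs⟩ := hmem c (by simp)
  obtain ⟨a', rfl⟩ := Option.ne_none_iff_exists'.1 ha
  obtain ⟨b', rfl⟩ := Option.ne_none_iff_exists'.1 hb
  obtain ⟨c', rfl⟩ := Option.ne_none_iff_exists'.1 hc
  have h1 : (cycleGraph (2*r+3)).Adj a' b' := hs.1 has hbs hab
  have h2 : (cycleGraph (2*r+3)).Adj b' c' := hs.1 hbs hcs hbc
  have h3 : (cycleGraph (2*r+3)).Adj a' c' := hs.1 has hcs hac
  exact cyc_no_triangle r a' b' c' h1 h2 h3 hr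

lemma cone_triangle (r : ℕ) :
    (cone (cycleGraph (2*r+3))).IsClique
      ({none, some 0, some 1} : Finset (Option (Fin (2*r+3)))) := by
  have h01 : (cycleGraph (2*r+3)).Adj 0 1 := (cyc_adj r).2 (Or.inr (zero_add 1).symm)
  intro x hx y hy hxy
  simp only [Finset.coe_insert, Set.mem_insert_iff, Finset.coe_singleton,
    Set.mem_singleton_iff] at hx hy
  rcases hx with rfl|rfl|rfl <;> rcases hy with rfl|rfl|rfl
  · exact absurd rfl hxy
  · exact trivial
  · exact trivial
  · exact trivial
  · exact absurd rfl hxy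
  · exact h01
  · exact trivial
  · exact h01.symm
  · exact absurd rfl hxy

lemma fin_zero_ne_one (r : ℕ) : (0 : Fin (2*r+3)) ≠ 1 := by
  intro h
  have := congrArg Fin.val h
  simp at this

lemma triangle_card (r : ℕ) :
    ({none, some 0, some 1} : Finset (Option (Fin (2*r+3)))).card = 3 := by
  rw [Finset.card_insert_of_notMem (by simp), Finset.card_insert_of_notMem
    (by simp [fin_zero_ne_one r]), Finset.card_singleton]

lemma cone_cliqueNum (r : ℕ) (hr : 1 ≤ r) : (cone (cycleGraph (2*r+3))).cliqueNum = 3 := by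
  apply le_antisymm
  · exact cliqueNum_le_of_cliqueFree (cone_cliqueFree r hr)
  · have := (cone_triangle r).card_le_cliqueNum
    rwa [triangle_card r] at this

section Master
variable (r : ℕ)

lemma maxDegree_induce_le_of_no_hub (A : Set (Option (Fin (2*r+3)))) (h : none ∉ A) :
    ((cone (cycleGraph (2*r+3))).induce A).maxDegree ≤ 3 := by
  apply maxDegree_le_of_forall_degree_le
  rintro ⟨(_|i), hv⟩
  · exact absurd hv h
  · exact rim_degree_le r A hv

lemma maxDegree_induce_le_hub (A : Set (Option (Fin (2*r+3)))) :
    ((cone (cycleGraph (2*r+3))).induce A).maxDegree ≤ max 3 (Sf r A).card := by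
  apply maxDegree_le_of_forall_degree_le
  rintro ⟨(_|i), hv⟩
  · rw [hub_degree r A hv]; exact le_max_right _ _
  · exact (rim_degree_le r A hv).trans (le_max_left _ _)

lemma maxDegree_induce_eq_zero (A : Set (Option (Fin (2*r+3))))
    (h : ∀ a b : ↥A, ¬((cone (cycleGraph (2*r+3))).induce A).Adj a b) :
    ((cone (cycleGraph (2*r+3))).induce A).maxDegree = 0 := by
  apply Nat.le_zero.1
  apply maxDegree_le_of_forall_degree_le
  intro v
  rw [SimpleGraph.degree, neighborFinset_eq_filter,
    Finset.filter_false_of_mem (fun w _ => h v w), Finset.card_empty]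

lemma cone_pair_clique {a b : Option (Fin (2*r+3))}
    (h : (cone (cycleGraph (2*r+3))).Adj a b) :
    (cone (cycleGraph (2*r+3))).IsClique ↑({a, b} : Finset (Option (Fin (2*r+3)))) := by
  intro x hx y hy hxy
  simp only [Finset.coe_insert, Set.mem_insert_iff, Finset.coe_singleton,
    Set.mem_singleton_iff] at hx hy
  rcases hx with rfl|rfl <;> rcases hy with rfl|rfl
  · exact absurd rfl hxy
  · exact h
  · exact h.symm
  · exact absurd rfl hxy

lemma cone_triangle_clique {i j : Fin (2*r+3)} (h : (cycleGraph (2*r+3)).Adj i j) :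
    (cone (cycleGraph (2*r+3))).IsClique
      ↑({none, some i, some j} : Finset (Option (Fin (2*r+3)))) := by
  intro x hx y hy hxy
  simp only [Finset.coe_insert, Set.mem_insert_iff, Finset.coe_singleton,
    Set.mem_singleton_iff] at hx hy
  rcases hx with rfl|rfl|rfl <;> rcases hy with rfl|rfl|rfl
  · exact absurd rfl hxy
  · exact trivial
  · exact trivial
  · exact trivial
  · exact absurd rfl hxy
  · exact h
  · exact trivial
  · exact h.symm
  · exact absurd rfl hxy

lemma cone_triangle_card {i j : Fin (2*r+3)} (h : i ≠ j) :
    ({none, some i, some j} : Finset (Option (Fin (2*r+3)))).card = 3 := by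
  rw [Finset.card_insert_of_notMem (by simp), Finset.card_insert_of_notMem
    (by simp [h]), Finset.card_singleton]

lemma masterOmega (hr : 1 ≤ r) (A : Set (Option (Fin (2*r+3)))) (hne : A.Nonempty)
    (hA : A ≠ Set.univ) :
    ((cone (cycleGraph (2*r+3))).induce A).maxDegree + 1
      ≤ ((cone (cycleGraph (2*r+3))).induce A).cliqueNum + 2*r := by
  by_cases hedge : ∀ a b : ↥A, ¬((cone (cycleGraph (2*r+3))).induce A).Adj a b
  · obtain ⟨v, hv⟩ := hne
    have hcl : (cone (cycleGraph (2*r+3))).IsClique ↑({v} : Finset (Option (Fin (2*r+3)))) := by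
      simp only [Finset.coe_singleton]
      exact Set.pairwise_singleton _ _
    have h1 := card_le_cliqueNum_induce (A := A) {v} (by simpa using hv) hcl
    rw [Finset.card_singleton] at h1
    rw [maxDegree_induce_eq_zero r A hedge]
    omega
  · push_neg at hedge
    obtain ⟨a, b, hab⟩ := hedge
    have hab' : (cone (cycleGraph (2*r+3))).Adj ↑a ↑b := hab
    have hsub2 : ↑({(↑a : Option (Fin (2*r+3))), ↑b} : Finset (Option (Fin (2*r+3)))) ⊆ A := by
      intro x hx
      simp only [Finset.coe_insert, Set.mem_insert_iff, Finset.coe_singleton,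
        Set.mem_singleton_iff] at hx
      rcases hx with rfl|rfl
      · exact a.2
      · exact b.2
    have hω2 := card_le_cliqueNum_induce (A := A) {↑a, ↑b} hsub2 (cone_pair_clique r hab')
    rw [Finset.card_pair hab'.ne] at hω2
    by_cases hhub : none ∈ A
    · by_cases hpair : ∃ i j, some i ∈ A ∧ some j ∈ A ∧ (cycleGraph (2*r+3)).Adj i j
      · obtain ⟨i, j, hi, hj, hij⟩ := hpair
        have hsub3 : ↑({none, some i, some j} : Finset (Option (Fin (2*r+3)))) ⊆ A := by
          intro x hx
          simp only [Finset.coe_insert, Set.mem_insert_iff, Finset.coe_singleton,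
            Set.mem_singleton_iff] at hx
          rcases hx with rfl|rfl|rfl
          · exact hhub
          · exact hi
          · exact hj
        have hω3 := card_le_cliqueNum_induce (A := A) _ hsub3 (cone_triangle_clique r hij)
        rw [cone_triangle_card r hij.ne] at hω3
        have hΔ := maxDegree_induce_le_hub r A
        have hS := sf_card_lt r A hA hhub
        have hm : max 3 (Sf r A).card ≤ 2*r+2 := max_le (by omega) hS
        omega
      · push_neg at hpair
        have hindep : ∀ i ∈ Sf r A, ∀ j ∈ Sf r A, ¬ (cycleGraph (2*r+3)).Adj i j :=
          fun i hi j hj => hpair i j ((mem_Sf r A).1 hi) ((mem_Sf r A).1 hj)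
        have hS := indep_bound r (Sf r A) hindep
        have hΔ := maxDegree_induce_le_hub r A
        have hm : max 3 (Sf r A).card ≤ 2*r+1 := max_le (by omega) hS
        omega
    · have hΔ := maxDegree_induce_le_of_no_hub r A hhub
      omega

lemma upsilon_step {V : Type*} [Fintype V] {H : SimpleGraph V} [DecidableRel H.Adj] {c k : ℕ}
    (hΔ : H.maxDegree + 1 ≤ c + k) (hχ : (c : ℕ∞) ≤ H.chromaticNumber) :
    (H.maxDegree + 1 : ℕ∞) ≤ H.chromaticNumber + (k : ℕ∞) := by
  calc (H.maxDegree + 1 : ℕ∞) = ((H.maxDegree + 1 : ℕ) : ℕ∞) := by push_cast; ring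
    _ ≤ ((c + k : ℕ) : ℕ∞) := Nat.cast_le.2 hΔ
    _ = (c : ℕ∞) + (k : ℕ∞) := by push_cast; ring
    _ ≤ H.chromaticNumber + (k : ℕ∞) := add_le_add_left hχ _

lemma masterUpsilon (hr : 1 ≤ r) (A : Set (Option (Fin (2*r+3)))) (hne : A.Nonempty) :
    (((cone (cycleGraph (2*r+3))).induce A).maxDegree + 1 : ℕ∞)
      ≤ ((cone (cycleGraph (2*r+3))).induce A).chromaticNumber + ((2*r : ℕ) : ℕ∞) := by
  by_cases hedge : ∀ a b : ↥A, ¬((cone (cycleGraph (2*r+3))).induce A).Adj a b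
  · obtain ⟨v, hv⟩ := hne
    have hcl : (cone (cycleGraph (2*r+3))).IsClique ↑({v} : Finset (Option (Fin (2*r+3)))) := by
      simp only [Finset.coe_singleton]
      exact Set.pairwise_singleton _ _
    have h1 := card_le_chromaticNumber_induce (A := A) {v} (by simpa using hv) hcl
    rw [Finset.card_singleton] at h1
    refine upsilon_step ?_ (by exact_mod_cast h1)
    rw [maxDegree_induce_eq_zero r A hedge]
    omega
  · push_neg at hedge
    obtain ⟨a, b, hab⟩ := hedge
    have hab' : (cone (cycleGraph (2*r+3))).Adj ↑a ↑b := hab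
    have hsub2 : ↑({(↑a : Option (Fin (2*r+3))), ↑b} : Finset (Option (Fin (2*r+3)))) ⊆ A := by
      intro x hx
      simp only [Finset.coe_insert, Set.mem_insert_iff, Finset.coe_singleton,
        Set.mem_singleton_iff] at hx
      rcases hx with rfl|rfl
      · exact a.2
      · exact b.2
    have hχ2 := card_le_chromaticNumber_induce (A := A) {↑a, ↑b} hsub2 (cone_pair_clique r hab')
    rw [Finset.card_pair hab'.ne] at hχ2
    by_cases hhub : none ∈ A
    · by_cases hpair : ∃ i j, some i ∈ A ∧ some j ∈ A ∧ (cycleGraph (2*r+3)).Adj i j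
      · obtain ⟨i, j, hi, hj, hij⟩ := hpair
        by_cases hA : A = Set.univ
        · have hχ4 : ((cone (cycleGraph (2*r+3))).induce A).chromaticNumber = 4 := by
            rw [hA]
            exact (chromaticNumber_eq_of_iso (induceUnivIso _)).trans (cone_chromaticNumber r)
          refine upsilon_step (c := 4) ?_ (by rw [hχ4]; norm_num)
          have hΔ := maxDegree_induce_le_hub r A
          have hS : (Sf r A).card ≤ 2*r+3 := by
            have := Finset.card_le_univ (Sf r A)
            rwa [Fintype.card_fin] at this
          have hm : max 3 (Sf r A).card ≤ 2*r+3 := max_le (by omega) hS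
          omega
        · have hsub3 : ↑({none, some i, some j} : Finset (Option (Fin (2*r+3)))) ⊆ A := by
            intro x hx
            simp only [Finset.coe_insert, Set.mem_insert_iff, Finset.coe_singleton,
              Set.mem_singleton_iff] at hx
            rcases hx with rfl|rfl|rfl
            · exact hhub
            · exact hi
            · exact hj
          have hχ3 := card_le_chromaticNumber_induce (A := A) _ hsub3 (cone_triangle_clique r hij)
          rw [cone_triangle_card r hij.ne] at hχ3
          refine upsilon_step (c := 3) ?_ (by exact_mod_cast hχ3)
          have hΔ := maxDegree_induce_le_hub r A
          have hS := sf_card_lt r A hA hhub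
          have hm : max 3 (Sf r A).card ≤ 2*r+2 := max_le (by omega) hS
          omega
      · push_neg at hpair
        have hindep : ∀ i ∈ Sf r A, ∀ j ∈ Sf r A, ¬ (cycleGraph (2*r+3)).Adj i j :=
          fun i hi j hj => hpair i j ((mem_Sf r A).1 hi) ((mem_Sf r A).1 hj)
        have hS := indep_bound r (Sf r A) hindep
        refine upsilon_step (c := 2) ?_ (by exact_mod_cast hχ2)
        have hΔ := maxDegree_induce_le_hub r A
        have hm : max 3 (Sf r A).card ≤ 2*r+1 := max_le (by omega) hS
        omega
    · refine upsilon_step (c := 2) ?_ (by exact_mod_cast hχ2)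
      have hΔ := maxDegree_induce_le_of_no_hub r A hhub
      omega

end Master

def induceFinsetUnivIso {V : Type*} [Fintype V] (G : SimpleGraph V) :
    G.induce (↑(Finset.univ : Finset V) : Set V) ≃g G where
  toEquiv := Equiv.subtypeUnivEquiv (fun x => Finset.mem_coe.2 (Finset.mem_univ x))
  map_rel_iff' := Iff.rfl


theorem oddWheel_minForbOmega_not_minForbUpsilon (r : ℕ) (hr : 1 ≤ r) :
    MinForbOmega (2 * r) (cone (cycleGraph (2 * r + 3))) ∧
      ¬ MinForbUpsilon (2 * r) (cone (cycleGraph (2 * r + 3))) ∧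
      (cone (cycleGraph (2 * r + 3))).maxDegree = 2 * r + 3 ∧
      (cone (cycleGraph (2 * r + 3))).cliqueNum + 2 * r = 2 * r + 3 ∧
      (cone (cycleGraph (2 * r + 3))).chromaticNumber = 4 := by
  refine ⟨⟨?_, ?_⟩, ?_, ?_, ?_, ?_⟩
  · intro h
    have h2 := h Finset.univ Finset.univ_nonempty
    have hΔ : ((cone (cycleGraph (2*r+3))).induce
        (↑(Finset.univ : Finset (Option (Fin (2*r+3)))) : Set _)).maxDegree = 2*r+3 :=
      (maxDegree_eq_of_iso (induceFinsetUnivIso _)).trans (cone_maxDegree r)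
    have hω : ((cone (cycleGraph (2*r+3))).induce
        (↑(Finset.univ : Finset (Option (Fin (2*r+3)))) : Set _)).cliqueNum = 3 :=
      le_antisymm
        ((cliqueNum_le_of_embedding (induceFinsetUnivIso _).toEmbedding).trans
          (le_of_eq (cone_cliqueNum r hr)))
        ((cone_cliqueNum r hr).symm.trans_le
          (cliqueNum_le_of_embedding (induceFinsetUnivIso _).symm.toEmbedding))
    rw [hΔ, hω] at h2
    omega
  · intro s hs t ht
    have e := induceInduceIso (cone (cycleGraph (2*r+3))) (↑s)
      (↑t : Set ↥(↑s : Set (Option (Fin (2*r+3)))))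
    have h1 := maxDegree_eq_of_iso e
    have h2 := le_antisymm (cliqueNum_le_of_embedding e.toEmbedding)
      (cliqueNum_le_of_embedding e.symm.toEmbedding)
    have hM := masterOmega r hr (Subtype.val '' (↑t : Set ↥(↑s : Set (Option (Fin (2*r+3))))))
      (by obtain ⟨x, hx⟩ := ht; exact ⟨x.val, ⟨x, hx, rfl⟩⟩)
      (by
        intro hu
        obtain ⟨y, hy⟩ : ∃ y, y ∉ s := by
          by_contra hc; push_neg at hc
          exact hs (Finset.eq_univ_iff_forall.2 hc)
        have hmem : y ∈ Subtype.val '' (↑t : Set ↥(↑s : Set (Option (Fin (2*r+3))))) := by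
          rw [hu]; trivial
        obtain ⟨w, -, rfl⟩ := hmem
        exact hy (Finset.mem_coe.1 w.2))
    erw [h1, h2]
    convert hM using 2
    exact maxDegree_inst_irrel _ _ _ _ _
  · rintro ⟨h1, -⟩
    apply h1
    intro s hs
    have hM := masterUpsilon r hr (↑s) (Finset.coe_nonempty.2 hs)
    convert hM using 3
    exact maxDegree_inst_irrel _ _ _ _ _
  · exact cone_maxDegree r
  · rw [cone_cliqueNum r hr]; omega
  · exact cone_chromaticNumber r
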